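/- With u_n as defined in the context, the sum over all rationals x of |u_n(x)|^p equals 1; that is, u_n is a unit vector of ℓ^p(ℚ). -/

import Mathlib

def lorSupportSet (l m : ℕ) : Set ℚ :=
  {x | ∃ i j : ℕ, i < 2 ^ l ∧ j < 3 ^ m ∧
    x = ((1 / 6 + (i : ℚ)) * (2 : ℚ) ^ (-(l : ℤ)) + (j : ℚ)) * (3 : ℚ) ^ (-(m : ℤ))}

lemma lor_repr (l m i j : ℕ) :
    ((1 / 6 + (i : ℚ)) * (2 : ℚ) ^ (-(l : ℤ)) + (j : ℚ)) * (3 : ℚ) ^ (-(m : ℤ))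
      = ((1 + 6*i + 6*2^l*j : ℕ) : ℚ) / ((2^(l+1)*3^(m+1) : ℕ) : ℚ) := by
  have h2 : (2:ℚ) ^ (-(l:ℤ)) = ((2:ℚ)^l)⁻¹ := by rw [zpow_neg, zpow_natCast]
  have h3 : (3:ℚ) ^ (-(m:ℤ)) = ((3:ℚ)^m)⁻¹ := by rw [zpow_neg, zpow_natCast]
  rw [h2, h3]
  push_cast
  have : (2:ℚ)^l ≠ 0 := by positivity
  have : (3:ℚ)^m ≠ 0 := by positivity
  field_simp
  ring

lemma val_key {A B s t s' t' : ℕ} (hA2 : ¬ 2 ∣ A) (hA3 : ¬ 3 ∣ A) (hB2 : ¬ 2 ∣ B) (hB3 : ¬ 3 ∣ B)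
    (h : A * (2^s' * 3^t') = B * (2^s * 3^t)) : s = s' ∧ t = t' ∧ A = B := by
  have hA : A ≠ 0 := by rintro rfl; exact hA2 (dvd_zero 2)
  have hB : B ≠ 0 := by rintro rfl; exact hB2 (dvd_zero 2)
  have h2 : (A * (2^s' * 3^t')).factorization 2 = (B * (2^s * 3^t)).factorization 2 := by rw [h]
  have h3 : (A * (2^s' * 3^t')).factorization 3 = (B * (2^s * 3^t)).factorization 3 := by rw [h]
  simp [Nat.factorization_mul, hA, hB, pow_ne_zero, Nat.Prime.factorization_pow,
    Nat.prime_two, Nat.prime_three, Finsupp.single_apply,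
    Nat.factorization_eq_zero_of_not_dvd hA2, Nat.factorization_eq_zero_of_not_dvd hB2] at h2
  simp [Nat.factorization_mul, hA, hB, pow_ne_zero, Nat.Prime.factorization_pow,
    Nat.prime_two, Nat.prime_three, Finsupp.single_apply,
    Nat.factorization_eq_zero_of_not_dvd hA3, Nat.factorization_eq_zero_of_not_dvd hB3] at h3
  subst h2 h3
  exact ⟨rfl, rfl, Nat.eq_of_mul_eq_mul_right (by positivity) h⟩

lemma lor_key {l m i j l' m' i' j' : ℕ} (hi : i < 2^l) (hi' : i' < 2^l')
    (h : ((1 / 6 + (i : ℚ)) * (2 : ℚ) ^ (-(l : ℤ)) + (j : ℚ)) * (3 : ℚ) ^ (-(m : ℤ))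
       = ((1 / 6 + (i' : ℚ)) * (2 : ℚ) ^ (-(l' : ℤ)) + (j' : ℚ)) * (3 : ℚ) ^ (-(m' : ℤ))) :
    l = l' ∧ m = m' ∧ i = i' ∧ j = j' := by
  rw [lor_repr, lor_repr] at h
  have hD : ((2^(l+1)*3^(m+1) : ℕ) : ℚ) ≠ 0 := by positivity
  have hD' : ((2^(l'+1)*3^(m'+1) : ℕ) : ℚ) ≠ 0 := by positivity
  rw [div_eq_div_iff hD hD'] at h
  have hNat : (1 + 6*i + 6*2^l*j) * (2^(l'+1) * 3^(m'+1))
      = (1 + 6*i' + 6*2^l'*j') * (2^(l+1) * 3^(m+1)) := by exact_mod_cast h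
  have key := val_key (A := 1 + 6*i + 6*2^l*j) (B := 1 + 6*i' + 6*2^l'*j')
    (s := l+1) (t := m+1) (s' := l'+1) (t' := m'+1)
    ?_ ?_ ?_ ?_ hNat
  · obtain ⟨hl, hm, hAB⟩ := key
    rw [mul_assoc 6 (2^l) j, mul_assoc 6 (2^l') j'] at hAB
    have hl' : l = l' := by omega
    have hm' : m = m' := by omega
    subst hl' hm'
    have hij : i + 2^l * j = i' + 2^l * j' := by omega
    have h1 : (i + 2^l * j) % 2^l = i := by
      rw [Nat.add_mul_mod_self_left, Nat.mod_eq_of_lt hi]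
    have h2 : (i' + 2^l * j') % 2^l = i' := by
      rw [Nat.add_mul_mod_self_left, Nat.mod_eq_of_lt hi']
    have hii : i = i' := by rw [← h1, ← h2, hij]
    refine ⟨rfl, rfl, hii, ?_⟩
    have hpos : 0 < 2^l := Nat.pow_pos (by norm_num)
    subst hii
    have : 2^l * j = 2^l * j' := by omega
    exact Nat.eq_of_mul_eq_mul_left hpos this
  all_goals (rw [mul_assoc]; omega)

noncomputable def krivineVec (p : ℝ) (n : ℕ) (x : ℚ) : ℝ :=
  (n : ℝ) ^ (-(2 / p)) *
    ∑ j ∈ Finset.Icc 1 n, ∑ k ∈ Finset.Icc 1 n,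
      (2 : ℝ) ^ (-(j : ℝ) / p) * (3 : ℝ) ^ (-(k : ℝ) / p) *
        (lorSupportSet j k).indicator (fun _ => (1 : ℝ)) x

/-- unique membership -/
lemma lor_mem_unique {a b j k : ℕ} {x : ℚ} (hx : x ∈ lorSupportSet a b)
    (hx' : x ∈ lorSupportSet j k) : j = a ∧ k = b := by
  obtain ⟨i1, j1, hi1, hj1, rfl⟩ := hx
  obtain ⟨i2, j2, hi2, hj2, he⟩ := hx'
  obtain ⟨h1, h2, -, -⟩ := lor_key hi2 hi1 (id he.symm)
  exact ⟨h1, h2⟩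

/-- the finset version of the support set -/
noncomputable def lorFinset (l m : ℕ) : Finset ℚ :=
  (Finset.range (2^l) ×ˢ Finset.range (3^m)).image
    fun q => ((1 / 6 + (q.1 : ℚ)) * (2 : ℚ) ^ (-(l : ℤ)) + (q.2 : ℚ)) * (3 : ℚ) ^ (-(m : ℤ))

lemma mem_lorFinset {l m : ℕ} {x : ℚ} : x ∈ lorFinset l m ↔ x ∈ lorSupportSet l m := by
  simp only [lorFinset, Finset.mem_image, Finset.mem_product, Finset.mem_range,
    lorSupportSet, Set.mem_setOf_eq, Prod.exists]
  constructor
  · rintro ⟨i, j, ⟨hi, hj⟩, rfl⟩; exact ⟨i, j, hi, hj, rfl⟩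
  · rintro ⟨i, j, hi, hj, rfl⟩; exact ⟨i, j, ⟨hi, hj⟩, rfl⟩

lemma card_lorFinset (l m : ℕ) : (lorFinset l m).card = 2^l * 3^m := by
  rw [lorFinset, Finset.card_image_of_injOn, Finset.card_product, Finset.card_range,
    Finset.card_range]
  rintro ⟨i, j⟩ hij ⟨i', j'⟩ hij' he
  simp only [Finset.mem_coe, Finset.mem_product, Finset.mem_range] at hij hij'
  obtain ⟨-, -, h3, h4⟩ := lor_key hij.1 hij'.1 he
  exact Prod.ext h3 h4

lemma krivineVec_eq_of_mem {p : ℝ} {n a b : ℕ} {x : ℚ} (ha : a ∈ Finset.Icc 1 n)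
    (hb : b ∈ Finset.Icc 1 n) (hx : x ∈ lorSupportSet a b) :
    krivineVec p n x = (n : ℝ) ^ (-(2 / p)) * ((2 : ℝ) ^ (-(a : ℝ) / p) * (3 : ℝ) ^ (-(b : ℝ) / p)) := by
  unfold krivineVec
  congr 1
  rw [Finset.sum_eq_single_of_mem a ha]
  · rw [Finset.sum_eq_single_of_mem b hb]
    · rw [Set.indicator_of_mem hx]; ring
    · intro k hk hkb
      have : x ∉ lorSupportSet a k := fun h => hkb (lor_mem_unique hx h).2
      rw [Set.indicator_of_notMem this, mul_zero]
  · intro j hj hja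
    apply Finset.sum_eq_zero
    intro k hk
    have : x ∉ lorSupportSet j k := fun h => hja (lor_mem_unique hx h).1
    rw [Set.indicator_of_notMem this, mul_zero]

lemma krivineVec_eq_zero {p : ℝ} {n : ℕ} {x : ℚ}
    (hx : ∀ a b : ℕ, a ∈ Finset.Icc 1 n → b ∈ Finset.Icc 1 n → x ∉ lorSupportSet a b) :
    krivineVec p n x = 0 := by
  unfold krivineVec
  rw [Finset.sum_eq_zero, mul_zero]
  intro j hj
  apply Finset.sum_eq_zero
  intro k hk
  rw [Set.indicator_of_notMem (hx j k hj hk), mul_zero]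

theorem stmt2 (p : ℝ) (hp : 1 ≤ p) (n : ℕ) (hn : 1 ≤ n) :
    ∑' x : ℚ, |krivineVec p n x| ^ p = 1 := by
  have hp0 : p ≠ 0 := by linarith
  have hppos : (0:ℝ) < p := by linarith
  set T : Finset ℚ := (Finset.Icc 1 n ×ˢ Finset.Icc 1 n).biUnion
    (fun q => lorFinset q.1 q.2) with hT
  have hzero : ∀ x : ℚ, x ∉ T → |krivineVec p n x| ^ p = 0 := by
    intro x hx
    rw [krivineVec_eq_zero, abs_zero, Real.zero_rpow hp0]
    intro a b ha hb hm
    exact hx (Finset.mem_biUnion.2 ⟨(a, b), Finset.mem_product.2 ⟨ha, hb⟩,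
      mem_lorFinset.2 hm⟩)
  rw [tsum_eq_sum hzero]
  have hdisj : ∀ q1 ∈ (Finset.Icc 1 n ×ˢ Finset.Icc 1 n),
      ∀ q2 ∈ (Finset.Icc 1 n ×ˢ Finset.Icc 1 n), q1 ≠ q2 →
      Disjoint (lorFinset q1.1 q1.2) (lorFinset q2.1 q2.2) := by
    rintro ⟨a, b⟩ h1 ⟨c, d⟩ h2 hne
    rw [Finset.disjoint_left]
    intro x hx hx'
    obtain ⟨hl, hm⟩ := lor_mem_unique (mem_lorFinset.1 hx') (mem_lorFinset.1 hx)
    exact hne (Prod.ext hl hm)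
  rw [hT, Finset.sum_biUnion hdisj]
  have hval : ∀ q ∈ (Finset.Icc 1 n ×ˢ Finset.Icc 1 n),
      ∑ x ∈ lorFinset q.1 q.2, |krivineVec p n x| ^ p = (n : ℝ) ^ (-(2:ℝ)) := by
    rintro ⟨a, b⟩ hq
    rw [Finset.mem_product] at hq
    have hsum : ∀ x ∈ lorFinset a b, |krivineVec p n x| ^ p
        = (n : ℝ) ^ (-(2:ℝ)) * ((2 : ℝ) ^ (-(a:ℝ)) * (3 : ℝ) ^ (-(b:ℝ))) := by
      intro x hx
      rw [krivineVec_eq_of_mem hq.1 hq.2 (mem_lorFinset.1 hx)]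
      have hn0 : (0:ℝ) < (n:ℝ) := by positivity
      have e1 : (0:ℝ) ≤ (n:ℝ) ^ (-(2/p)) := Real.rpow_nonneg hn0.le _
      have e2 : (0:ℝ) ≤ (2:ℝ) ^ (-(a:ℝ)/p) := Real.rpow_nonneg (by norm_num) _
      have e3 : (0:ℝ) ≤ (3:ℝ) ^ (-(b:ℝ)/p) := Real.rpow_nonneg (by norm_num) _
      rw [abs_of_nonneg (by positivity)]
      rw [Real.mul_rpow e1 (by positivity), Real.mul_rpow e2 e3,
        ← Real.rpow_mul hn0.le, ← Real.rpow_mul (by norm_num : (0:ℝ) ≤ 2),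
        ← Real.rpow_mul (by norm_num : (0:ℝ) ≤ 3)]
      have ea : -(2/p)*p = -(2:ℝ) := by field_simp
      have eb : -(a:ℝ)/p*p = -(a:ℝ) := by field_simp
      have ec : -(b:ℝ)/p*p = -(b:ℝ) := by field_simp
      rw [ea, eb, ec]
    rw [Finset.sum_congr rfl hsum, Finset.sum_const, card_lorFinset, nsmul_eq_mul]
    have : ((2^a*3^b : ℕ) : ℝ) = (2:ℝ)^a * (3:ℝ)^b := by push_cast; ring
    rw [this, Real.rpow_neg (by norm_num : (0:ℝ) ≤ 2), Real.rpow_neg (by norm_num : (0:ℝ) ≤ 3),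
      Real.rpow_natCast, Real.rpow_natCast]
    have h2 : (2:ℝ)^a ≠ 0 := by positivity
    have h3 : (3:ℝ)^b ≠ 0 := by positivity
    field_simp
  rw [Finset.sum_congr rfl hval, Finset.sum_const, Finset.card_product, Nat.card_Icc,
    nsmul_eq_mul]
  have hn0 : (0:ℝ) < (n:ℝ) := by exact_mod_cast hn
  rw [Real.rpow_neg hn0.le, Real.rpow_two]
  have : (n:ℝ) ≠ 0 := hn0.ne'
  push_cast
  field_simp
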